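/- If two first-order theories T₁ and T₂ are definitionally equivalent, then their categories of models Mod(T₁) and Mod(T₂) (with elementary embeddings as morphisms) are equivalent categories. -/

import Mathlib

open FirstOrder FirstOrder.Language CategoryTheory

universe u v u' v' w

namespace MoritaPaper

variable {L : FirstOrder.Language.{u, v}} {L₂ : FirstOrder.Language.{u', v'}}

/-- The explicit definition `∀ xs (r(xs) ↔ φ(xs))` of a new relation symbol `r` by an
old-signature formula `φ`, as a sentence of the extended signature `L.sum L₂`. -/
noncomputable def relDefSentence {n : ℕ} (r : L₂.Relations n) (φ : L.Formula (Fin n)) :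
    (L.sum L₂).Sentence :=
  Formula.iAlls (Fin n) <| Formula.relabel (Sum.inr : Fin n → Empty ⊕ Fin n)
    ((Relations.formula (Sum.inr r : (L.sum L₂).Relations n) Term.var) ⇔
      (LHom.sumInl.onFormula φ))

/-- The explicit definition `∀ xs ∀ y (f(xs) = y ↔ φ(xs, y))` of a new function symbol `f`
(a constant symbol when `n = 0`) by an old-signature formula `φ`, as a sentence of the
extended signature `L.sum L₂`. -/
noncomputable def funDefSentence {n : ℕ} (f : L₂.Functions n) (φ : L.Formula (Fin (n + 1))) :
    (L.sum L₂).Sentence :=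
  Formula.iAlls (Fin (n + 1)) <| Formula.relabel (Sum.inr : Fin (n + 1) → Empty ⊕ Fin (n + 1))
    ((Term.equal
        (Term.func (Sum.inr f : (L.sum L₂).Functions n) fun i => Term.var i.castSucc)
        (Term.var (Fin.last n))) ⇔
      (LHom.sumInl.onFormula φ))

/-- The admissibility condition for the explicit definition of a function symbol by
`φ(xs, y)` : the theory `T` entails `∀ xs ∃! y φ(xs, y)`. -/
def Admissible (T : L.Theory) {n : ℕ} (φ : L.Formula (Fin (n + 1))) : Prop :=
  ∀ (M : Type w) [Nonempty M] [L.Structure M], M ⊨ T →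
    ∀ xs : Fin n → M, ∃! y : M, φ.Realize (Fin.snoc xs y)

/-- The data of a definitional extension of the `L`-theory `T` to the signature `L.sum L₂`:
an explicit definition by an `L`-formula for every new symbol (every symbol of `L₂`), such
that `T` entails the admissibility conditions of the function- and constant-symbol
definitions. -/
structure DefExt (L : FirstOrder.Language.{u, v}) (L₂ : FirstOrder.Language.{u', v'}) (T : L.Theory) where
  relφ : ∀ {n : ℕ}, L₂.Relations n → L.Formula (Fin n)
  funφ : ∀ {n : ℕ}, L₂.Functions n → L.Formula (Fin (n + 1))
  admissible : ∀ {n : ℕ} (f : L₂.Functions n), Admissible.{u, v, w} T (funφ f)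

/-- The definitional extension `T⁺ = T ∪ {δ_s : s ∈ Σ⁺ − Σ}` itself, as a theory of the
extended signature. -/
noncomputable def DefExt.theory {T : L.Theory} (D : DefExt.{u, v, u', v', w} L L₂ T) :
    (L.sum L₂).Theory :=
  LHom.sumInl.onTheory T ∪
    (⋃ n : ℕ, Set.range fun r : L₂.Relations n => relDefSentence r (D.relφ r)) ∪
    (⋃ n : ℕ, Set.range fun f : L₂.Functions n => funDefSentence f (D.funφ f))

end MoritaPaper

namespace MoritaPaper
variable {L : FirstOrder.Language.{u, v}} {L₂ : FirstOrder.Language.{u', v'}}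

/-- The category `Mod(T)` of models of a first-order theory `T`, with elementary
embeddings as morphisms. -/
instance modelCat (T : L.Theory) : Category (Theory.ModelType.{u, v, w} T) where
  Hom M N := M ↪ₑ[L] N
  id M := ElementaryEmbedding.refl L M
  comp f g := g.comp f
  id_comp _ := ElementaryEmbedding.ext fun _ => rfl
  comp_id _ := ElementaryEmbedding.ext fun _ => rfl
  assoc _ _ _ := ElementaryEmbedding.ext fun _ => rfl

/-- The restriction of a `Σ⁺`-elementary embedding to an elementary embedding between the
`Σ`-reducts. -/
def restrictEmb {M N : Type w} [(L.sum L₂).Structure M] [(L.sum L₂).Structure N]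
    (h : M ↪ₑ[L.sum L₂] N) :
    @FirstOrder.Language.ElementaryEmbedding L M N
      ((LHom.sumInl : L →ᴸ L.sum L₂).reduct M) ((LHom.sumInl : L →ᴸ L.sum L₂).reduct N) :=
  letI := (LHom.sumInl : L →ᴸ L.sum L₂).reduct M
  letI := (LHom.sumInl : L →ᴸ L.sum L₂).reduct N
  { toFun := h
    map_formula' := fun {_} φ x => by
      haveI := LHom.isExpansionOn_reduct (LHom.sumInl : L →ᴸ L.sum L₂) M
      haveI := LHom.isExpansionOn_reduct (LHom.sumInl : L →ᴸ L.sum L₂) N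
      have h' := h.map_formula ((LHom.sumInl : L →ᴸ L.sum L₂).onFormula φ) x
      rwa [LHom.realize_onFormula, LHom.realize_onFormula] at h' }

/-- The language morphism swapping the two halves of a sum signature. -/
def sumCommHom : L₂.sum L →ᴸ L.sum L₂ where
  onFunction := fun {_} f => f.swap
  onRelation := fun {_} r => r.swap

/-- Definitional equivalence: `T₁` and `T₂` are definitionally equivalent if there are a
definitional extension `T₁⁺` of `T₁` and a definitional extension `T₂⁺` of `T₂`, both to
the union signature, that are logically equivalent (have the same models). -/
def DefEquiv (T₁ : L.Theory) (T₂ : L₂.Theory) : Prop :=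
  ∃ (D₁ : DefExt.{u, v, u', v', w} L L₂ T₁) (D₂ : DefExt.{u', v', u, v, w} L₂ L T₂),
    ∀ (M : Type w) [Nonempty M] [S : (L.sum L₂).Structure M],
      @FirstOrder.Language.Theory.Model (L.sum L₂) M S D₁.theory ↔
      @FirstOrder.Language.Theory.Model (L₂.sum L) M
        (@LHom.reduct (L₂.sum L) (L.sum L₂) sumCommHom M S) D₂.theory

set_option linter.unusedSectionVars false

section Realize
variable {M : Type w} [Nonempty M] [(L.sum L₂).Structure M]

theorem realize_relDefSentence_iff {n : ℕ} {r : L₂.Relations n} {φ : L.Formula (Fin n)} :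
    M ⊨ relDefSentence r φ ↔
      ∀ xs : Fin n → M, @Structure.RelMap (L.sum L₂) M _ n (Sum.inr r) xs ↔
        (letI := (LHom.sumInl : L →ᴸ L.sum L₂).reduct M; φ.Realize xs) := by
  letI := (LHom.sumInl : L →ᴸ L.sum L₂).reduct M
  haveI := LHom.isExpansionOn_reduct (LHom.sumInl : L →ᴸ L.sum L₂) M
  have H0 : M ⊨ relDefSentence r φ ↔
      ∀ i : Fin n → M,
        Formula.Realize ((Relations.formula (Sum.inr r : (L.sum L₂).Relations n) Term.var) ⇔
          (LHom.sumInl.onFormula φ))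
          (fun a => Sum.elim (default : Empty → M) i (Sum.inr a)) :=
    Formula.realize_iAlls.trans (forall_congr' fun i => Formula.realize_relabel)
  refine H0.trans (forall_congr' fun xs => ?_)
  rw [Formula.realize_iff, LHom.realize_onFormula]
  exact Iff.rfl

theorem realize_funDefSentence_iff {n : ℕ} {f : L₂.Functions n} {φ : L.Formula (Fin (n + 1))} :
    M ⊨ funDefSentence f φ ↔
      ∀ (xs : Fin n → M) (y : M), @Structure.funMap (L.sum L₂) M _ n (Sum.inr f) xs = y ↔
        (letI := (LHom.sumInl : L →ᴸ L.sum L₂).reduct M; φ.Realize (Fin.snoc xs y)) := by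
  letI := (LHom.sumInl : L →ᴸ L.sum L₂).reduct M
  haveI := LHom.isExpansionOn_reduct (LHom.sumInl : L →ᴸ L.sum L₂) M
  have H0 : M ⊨ funDefSentence f φ ↔
      ∀ i : Fin (n + 1) → M,
        Formula.Realize ((Term.equal
            (Term.func (Sum.inr f : (L.sum L₂).Functions n) fun j => Term.var j.castSucc)
            (Term.var (Fin.last n))) ⇔
          (LHom.sumInl.onFormula φ))
          (fun a => Sum.elim (default : Empty → M) i (Sum.inr a)) :=
    Formula.realize_iAlls.trans (forall_congr' fun i => Formula.realize_relabel)
  have key : ∀ xs : Fin (n+1) → M,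
      Formula.Realize ((Term.equal
          (Term.func (Sum.inr f : (L.sum L₂).Functions n) fun j => Term.var j.castSucc)
          (Term.var (Fin.last n))) ⇔
        (LHom.sumInl.onFormula φ)) (fun a => xs a) ↔
      ((@Structure.funMap (L.sum L₂) M _ n (Sum.inr f) fun i => xs i.castSucc) = xs (Fin.last n) ↔
        φ.Realize xs) := by
    intro xs
    rw [Formula.realize_iff, Formula.realize_equal, LHom.realize_onFormula]
    simp only [Term.realize_func, Term.realize_var]
    exact Iff.rfl
  rw [H0]
  refine ⟨fun H xs y => ?_, fun H xs => ?_⟩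
  · have := (key (Fin.snoc xs y)).mp (H (Fin.snoc xs y))
    simpa [Fin.snoc_castSucc, Fin.snoc_last] using this
  · refine (key xs).mpr ?_
    have := H (fun i => xs i.castSucc) (xs (Fin.last n))
    have e : Fin.snoc (fun i => xs i.castSucc) (xs (Fin.last n)) = xs := Fin.snoc_init_self xs
    rwa [e] at this



theorem models_defExt_iff {T : L.Theory} (D : DefExt.{u, v, u', v', w} L L₂ T) :
    M ⊨ D.theory ↔
      ((letI := (LHom.sumInl : L →ᴸ L.sum L₂).reduct M; M ⊨ T) ∧
       (∀ {n : ℕ} (r : L₂.Relations n) (xs : Fin n → M),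
          @Structure.RelMap (L.sum L₂) M _ n (Sum.inr r) xs ↔
            (letI := (LHom.sumInl : L →ᴸ L.sum L₂).reduct M; (D.relφ r).Realize xs)) ∧
       (∀ {n : ℕ} (f : L₂.Functions n) (xs : Fin n → M) (y : M),
          @Structure.funMap (L.sum L₂) M _ n (Sum.inr f) xs = y ↔
            (letI := (LHom.sumInl : L →ᴸ L.sum L₂).reduct M;
              (D.funφ f).Realize (Fin.snoc xs y)))) := by
  letI := (LHom.sumInl : L →ᴸ L.sum L₂).reduct M
  haveI := LHom.isExpansionOn_reduct (LHom.sumInl : L →ᴸ L.sum L₂) M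
  rw [DefExt.theory, Theory.model_union_iff, Theory.model_union_iff, LHom.onTheory_model]
  constructor
  · rintro ⟨⟨hA, hB⟩, hC⟩
    refine ⟨hA, fun {n} r xs => ?_, fun {n} f xs y => ?_⟩
    · exact realize_relDefSentence_iff.mp
        (hB.realize_of_mem _ (Set.mem_iUnion.mpr ⟨n, Set.mem_range_self r⟩)) xs
    · exact realize_funDefSentence_iff.mp
        (hC.realize_of_mem _ (Set.mem_iUnion.mpr ⟨n, Set.mem_range_self f⟩)) xs y
  · rintro ⟨hA, hB, hC⟩
    refine ⟨⟨hA, (Theory.model_iff _).mpr ?_⟩, (Theory.model_iff _).mpr ?_⟩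
    · intro ψ hψ
      obtain ⟨n, r, rfl⟩ : ∃ (n : ℕ) (r : L₂.Relations n), relDefSentence r (D.relφ r) = ψ := by
        simpa [Set.mem_iUnion] using hψ
      exact realize_relDefSentence_iff.mpr (hB r)
    · intro ψ hψ
      obtain ⟨n, f, rfl⟩ : ∃ (n : ℕ) (f : L₂.Functions n), funDefSentence f (D.funφ f) = ψ := by
        simpa [Set.mem_iUnion] using hψ
      exact realize_funDefSentence_iff.mpr (hC f)

end Realize


section Translation

variable {T : L.Theory}

/-- Realization of an `L`-formula in the `L`-reduct of an `L ⊕ L₂`-structure. -/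
abbrev RealizeL {M : Type w} [(L.sum L₂).Structure M] {α : Type*} (ψ : L.Formula α)
    (v : α → M) : Prop :=
  letI := (LHom.sumInl : L →ᴸ L.sum L₂).reduct M
  ψ.Realize v

/-- An `L`-formula defining the graph of a function symbol of `L.sum L₂`. -/
noncomputable def funGraph (D : DefExt.{u, v, u', v', w} L L₂ T) {k : ℕ}
    (f : (L.sum L₂).Functions k) : L.Formula (Fin (k + 1)) :=
  match f with
  | Sum.inl f₀ => Term.equal (Term.func f₀ fun i => Term.var i.castSucc) (Term.var (Fin.last k))
  | Sum.inr f₂ => D.funφ f₂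

/-- An `L`-formula defining a relation symbol of `L.sum L₂`. -/
noncomputable def relGraph (D : DefExt.{u, v, u', v', w} L L₂ T) {k : ℕ}
    (R : (L.sum L₂).Relations k) : L.Formula (Fin k) :=
  match R with
  | Sum.inl R₀ => Relations.formula R₀ Term.var
  | Sum.inr R₂ => D.relφ R₂

theorem realize_funGraph {D : DefExt.{u, v, u', v', w} L L₂ T} {M : Type w} [Nonempty M]
    [(L.sum L₂).Structure M] (hM : M ⊨ D.theory) {k : ℕ} (f : (L.sum L₂).Functions k)
    (z : Fin k → M) (y : M) :
    RealizeL (L₂ := L₂) (funGraph D f) (Fin.snoc z y) ↔ @Structure.funMap (L.sum L₂) M _ k f z = y := by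
  letI := (LHom.sumInl : L →ᴸ L.sum L₂).reduct M
  cases f with
  | inl f₀ =>
    rw [funGraph, RealizeL, Formula.realize_equal]
    simp only [Term.realize_func, Term.realize_var, Fin.snoc_castSucc, Fin.snoc_last]
    exact Iff.rfl
  | inr f₂ =>
    exact (((models_defExt_iff D).mp hM).2.2 f₂ z y).symm

theorem realize_relGraph {D : DefExt.{u, v, u', v', w} L L₂ T} {M : Type w} [Nonempty M]
    [(L.sum L₂).Structure M] (hM : M ⊨ D.theory) {k : ℕ} (R : (L.sum L₂).Relations k)
    (z : Fin k → M) :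
    RealizeL (L₂ := L₂) (relGraph D R) z ↔ @Structure.RelMap (L.sum L₂) M _ k R z := by
  letI := (LHom.sumInl : L →ᴸ L.sum L₂).reduct M
  cases R with
  | inl R₀ =>
    rw [relGraph, RealizeL, Formula.realize_rel]
    exact Iff.rfl
  | inr R₂ =>
    exact (((models_defExt_iff D).mp hM).2.1 R₂ z).symm

theorem exists_graph (D : DefExt.{u, v, u', v', w} L L₂ T) {β : Type u₀}
    (t : (L.sum L₂).Term β) :
    ∃ θ : L.Formula (β ⊕ Unit), ∀ (M : Type w) [Nonempty M] [(L.sum L₂).Structure M],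
      M ⊨ D.theory → ∀ (v : β → M) (y : M),
        RealizeL (L₂ := L₂) θ (Sum.elim v fun _ => y) ↔ t.realize v = y := by
  induction t with
  | var a =>
    refine ⟨Term.equal (Term.var (Sum.inl a)) (Term.var (Sum.inr ())), ?_⟩
    intro M _ _ hM v y
    letI := (LHom.sumInl : L →ᴸ L.sum L₂).reduct M
    rw [RealizeL, Formula.realize_equal]
    simp [Term.realize_var]
  | @func k f ts ih =>
    choose θ hθ using ih
    refine ⟨Formula.iExs (Fin k)
      ((BoundedFormula.iInf fun i : Fin k =>
          (θ i).relabel (Sum.elim (fun b => Sum.inl (Sum.inl b)) fun _ => Sum.inr i)) ⊓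
        (funGraph D f).relabel (Fin.snoc (fun i : Fin k => Sum.inr i)
          (Sum.inl (Sum.inr ())))), ?_⟩
    intro M _ _ hM v y
    letI := (LHom.sumInl : L →ᴸ L.sum L₂).reduct M
    rw [RealizeL, Formula.realize_iExs]
    have step : ∀ z : Fin k → M,
        (Formula.Realize ((BoundedFormula.iInf fun i : Fin k =>
          (θ i).relabel (Sum.elim (fun b => Sum.inl (Sum.inl b)) fun _ => Sum.inr i)) ⊓
        (funGraph D f).relabel (Fin.snoc (fun i : Fin k => Sum.inr i)
          (Sum.inl (Sum.inr ()))))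
          (Sum.elim (Sum.elim v fun _ => y) z)) ↔
        ((∀ i, (ts i).realize v = z i) ∧ @Structure.funMap (L.sum L₂) M _ k f z = y) := by
      intro z
      rw [Formula.realize_inf]
      apply and_congr
      · rw [Formula.Realize, BoundedFormula.realize_iInf]
        refine forall_congr' fun i => ?_
        have e : (Sum.elim (Sum.elim v fun _ => y) z) ∘
            ((Sum.elim (fun b => Sum.inl (Sum.inl b)) fun _ : Unit => Sum.inr i) :
              β ⊕ Unit → (β ⊕ Unit) ⊕ Fin k) =
            Sum.elim v (fun _ => z i) := by
          funext a
          rcases a with b | u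
          · rfl
          · rfl
        rw [show (BoundedFormula.Realize
            ((θ i).relabel (Sum.elim (fun b => Sum.inl (Sum.inl b)) fun _ : Unit => Sum.inr i))
            (Sum.elim (Sum.elim v fun _ => y) z) default) =
            (Formula.Realize ((θ i).relabel
              (Sum.elim (fun b => Sum.inl (Sum.inl b)) fun _ : Unit => Sum.inr i))
              (Sum.elim (Sum.elim v fun _ => y) z)) from rfl,
          Formula.realize_relabel, e]
        exact hθ i M hM v (z i)
      · rw [Formula.realize_relabel]
        have e : (Sum.elim (Sum.elim v fun _ => y) z) ∘
            (Fin.snoc (fun i : Fin k => Sum.inr i) (Sum.inl (Sum.inr ()))) =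
            Fin.snoc z y := by
          rw [Fin.comp_snoc]
          congr
        rw [e]
        exact realize_funGraph hM f z y
    constructor
    · rintro ⟨z, hz⟩
      have := (step z).mp hz
      rw [Term.realize_func]
      rw [show (fun i => (ts i).realize v) = z from funext fun i => this.1 i]
      exact this.2
    · intro hy
      refine ⟨fun i => (ts i).realize v, (step _).mpr ⟨fun i => rfl, ?_⟩⟩
      rw [Term.realize_func] at hy
      exact hy

end Translation



section Translation2

variable {T : L.Theory}

/-- Turn a formula over `α ⊕ Fin n` into a bounded formula. -/
def ofSumFormula {α : Type u₀} {n : ℕ} (φ : L.Formula (α ⊕ Fin n)) : L.BoundedFormula α n :=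
  BoundedFormula.relabel id φ

theorem realize_ofSumFormula {α : Type u₀} {n : ℕ} {M : Type w} [L.Structure M]
    (φ : L.Formula (α ⊕ Fin n)) (v : α → M) (xs : Fin n → M) :
    (ofSumFormula φ).Realize v xs ↔ φ.Realize (Sum.elim v xs) := by
  rw [ofSumFormula, BoundedFormula.realize_relabel]
  have e1 : (Sum.elim v (xs ∘ Fin.castAdd 0) ∘ id) = Sum.elim v xs := rfl
  rw [e1]
  exact iff_of_eq (congrArg (BoundedFormula.Realize φ (Sum.elim v xs))
    (funext fun x => x.elim0)).symm

theorem exists_translation (D : DefExt.{u, v, u', v', w} L L₂ T) {α : Type u₀} :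
    ∀ {n : ℕ} (φ : (L.sum L₂).BoundedFormula α n),
    ∃ ψ : L.BoundedFormula α n, ∀ (M : Type w) [Nonempty M] [(L.sum L₂).Structure M],
      M ⊨ D.theory → ∀ (v : α → M) (xs : Fin n → M),
        φ.Realize v xs ↔
          (letI := (LHom.sumInl : L →ᴸ L.sum L₂).reduct M; ψ.Realize v xs) := by
  intro n φ
  induction φ with
  | falsum =>
    exact ⟨⊥, fun M _ _ hM v xs => Iff.rfl⟩
  | @equal n t₁ t₂ =>
    obtain ⟨θ₁, hθ₁⟩ := exists_graph D t₁
    obtain ⟨θ₂, hθ₂⟩ := exists_graph D t₂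
    refine ⟨ofSumFormula (Formula.iExs Unit (θ₁ ⊓ θ₂)), ?_⟩
    intro M _ _ hM v xs
    letI := (LHom.sumInl : L →ᴸ L.sum L₂).reduct M
    rw [realize_ofSumFormula, Formula.realize_iExs]
    have key : ∀ i : Unit → M,
        (fun a => Sum.elim (Sum.elim v xs) i a) = Sum.elim (Sum.elim v xs) (fun _ => i ()) := by
      intro i
      funext a
      rcases a with b | u
      · rfl
      · cases u; rfl
    constructor
    · rintro h
      refine ⟨fun _ => t₁.realize (Sum.elim v xs), ?_⟩
      rw [Formula.realize_inf]
      exact ⟨(hθ₁ M hM _ _).mpr rfl, (hθ₂ M hM _ _).mpr h.symm⟩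
    · rintro ⟨i, hi⟩
      rw [show Sum.elim (Sum.elim v xs) i = Sum.elim (Sum.elim v xs) (fun _ => i ()) from key i,
        Formula.realize_inf] at hi
      have e1 := (hθ₁ M hM (Sum.elim v xs) (i ())).mp hi.1
      have e2 := (hθ₂ M hM (Sum.elim v xs) (i ())).mp hi.2
      show t₁.realize (Sum.elim v xs) = t₂.realize (Sum.elim v xs)
      rw [e1, e2]
  | @rel n k R ts =>
    have ih : ∀ i : Fin k, ∃ θ : L.Formula ((α ⊕ Fin n) ⊕ Unit),
        ∀ (M : Type w) [Nonempty M] [(L.sum L₂).Structure M], M ⊨ D.theory →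
          ∀ (v : (α ⊕ Fin n) → M) (y : M),
            RealizeL (L₂ := L₂) θ (Sum.elim v fun _ => y) ↔ (ts i).realize v = y :=
      fun i => exists_graph D (ts i)
    choose θ hθ using ih
    refine ⟨ofSumFormula (Formula.iExs (Fin k)
      ((BoundedFormula.iInf fun i : Fin k =>
          (θ i).relabel (Sum.map id fun _ : Unit => i)) ⊓
        (relGraph D R).relabel (fun i => Sum.inr i))), ?_⟩
    intro M _ _ hM v xs
    letI := (LHom.sumInl : L →ᴸ L.sum L₂).reduct M
    rw [realize_ofSumFormula, Formula.realize_iExs]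
    have step : ∀ z : Fin k → M,
        (Formula.Realize ((BoundedFormula.iInf fun i : Fin k =>
            (θ i).relabel (Sum.map id fun _ : Unit => i)) ⊓
          (relGraph D R).relabel (fun i => Sum.inr i))
          (Sum.elim (Sum.elim v xs) z)) ↔
        ((∀ i, (ts i).realize (Sum.elim v xs) = z i) ∧
          @Structure.RelMap (L.sum L₂) M _ k R z) := by
      intro z
      rw [Formula.realize_inf]
      apply and_congr
      · rw [Formula.Realize, BoundedFormula.realize_iInf]
        refine forall_congr' fun i => ?_
        have e : (Sum.elim (Sum.elim v xs) z) ∘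
            ((Sum.map id fun _ : Unit => i) : (α ⊕ Fin n) ⊕ Unit → (α ⊕ Fin n) ⊕ Fin k) =
            Sum.elim (Sum.elim v xs) (fun _ => z i) := by
          funext a
          rcases a with b | u
          · rfl
          · rfl
        rw [show (BoundedFormula.Realize
            ((θ i).relabel ((Sum.map id fun _ : Unit => i) :
              (α ⊕ Fin n) ⊕ Unit → (α ⊕ Fin n) ⊕ Fin k))
            (Sum.elim (Sum.elim v xs) z) default) =
            (Formula.Realize ((θ i).relabel ((Sum.map id fun _ : Unit => i) :
              (α ⊕ Fin n) ⊕ Unit → (α ⊕ Fin n) ⊕ Fin k))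
            (Sum.elim (Sum.elim v xs) z)) from rfl, Formula.realize_relabel, e]
        exact hθ i M hM (Sum.elim v xs) (z i)
      · rw [Formula.realize_relabel]
        have e : (Sum.elim (Sum.elim v xs) z) ∘ (fun i : Fin k => Sum.inr i) = z := rfl
        rw [e]
        exact realize_relGraph hM R z
    constructor
    · intro h
      refine ⟨fun i => (ts i).realize (Sum.elim v xs), (step _).mpr ⟨fun i => rfl, h⟩⟩
    · rintro ⟨z, hz⟩
      have := (step z).mp hz
      have e : (fun i => (ts i).realize (Sum.elim v xs)) = z := funext fun i => this.1 i
      show @Structure.RelMap (L.sum L₂) M _ k R (fun i => (ts i).realize (Sum.elim v xs))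
      rw [e]
      exact this.2
  | @imp n φ₁ φ₂ ih₁ ih₂ =>
    obtain ⟨ψ₁, h₁⟩ := ih₁
    obtain ⟨ψ₂, h₂⟩ := ih₂
    refine ⟨ψ₁.imp ψ₂, ?_⟩
    intro M _ _ hM v xs
    letI := (LHom.sumInl : L →ᴸ L.sum L₂).reduct M
    rw [BoundedFormula.realize_imp, BoundedFormula.realize_imp]
    exact imp_congr (h₁ M hM v xs) (h₂ M hM v xs)
  | @all n φ ih =>
    obtain ⟨ψ, hψ⟩ := ih
    refine ⟨ψ.all, ?_⟩
    intro M _ _ hM v xs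
    letI := (LHom.sumInl : L →ᴸ L.sum L₂).reduct M
    rw [BoundedFormula.realize_all, BoundedFormula.realize_all]
    exact forall_congr' fun y => hψ M hM v (Fin.snoc xs y)

end Translation2



section Expansion

variable {T : L.Theory}

theorem structure_ext {L' : FirstOrder.Language.{u₀, v₀}} {M : Type w₀}
    (S S' : L'.Structure M)
    (hf : ∀ (n : ℕ) (f : L'.Functions n) (xs : Fin n → M),
      @Structure.funMap L' M S n f xs = @Structure.funMap L' M S' n f xs)
    (hr : ∀ (n : ℕ) (r : L'.Relations n) (xs : Fin n → M),
      @Structure.RelMap L' M S n r xs ↔ @Structure.RelMap L' M S' n r xs) : S = S' := by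
  rcases S with ⟨Sf, Sr⟩
  rcases S' with ⟨Sf', Sr'⟩
  congr 1
  · funext n f xs
    exact hf n f xs
  · funext n r xs
    exact propext (hr n r xs)

theorem model_congr {L' : FirstOrder.Language.{u₀, v₀}} {M : Type w₀}
    {S S' : L'.Structure M} (h : S = S') {T' : L'.Theory}
    (hM : @Theory.Model L' M S T') : @Theory.Model L' M S' T' := h ▸ hM

theorem reduct_comm_comm {M : Type w₀} (S : (L.sum L₂).Structure M) :
    @LHom.reduct (L.sum L₂) (L₂.sum L) (@sumCommHom L₂ L) M
      (@LHom.reduct (L₂.sum L) (L.sum L₂) (@sumCommHom L L₂) M S) = S := by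
  apply structure_ext
  · intro n f xs
    show @Structure.funMap (L.sum L₂) M S n (Sum.swap (Sum.swap f)) xs = _
    exact congrArg (fun g => @Structure.funMap (L.sum L₂) M S n g xs)
      (Sum.swap_swap (f : L.Functions n ⊕ L₂.Functions n))
  · intro n r xs
    show @Structure.RelMap (L.sum L₂) M S n (Sum.swap (Sum.swap r)) xs ↔ _
    exact iff_of_eq (congrArg (fun g => @Structure.RelMap (L.sum L₂) M S n g xs)
      (Sum.swap_swap (r : L.Relations n ⊕ L₂.Relations n)))

/-- The `L₂`-structure on a model of `T` given by the explicit definitions in `D`. -/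
noncomputable def defL2Structure (D : DefExt.{u, v, u', v', w} L L₂ T) (M : Type w)
    [Nonempty M] [L.Structure M] (hM : M ⊨ T) : L₂.Structure M where
  funMap {n} f xs := (D.admissible f M hM xs).choose
  RelMap {n} r xs := (D.relφ r).Realize xs

/-- The expansion of a model of `T` to an `(L.sum L₂)`-structure via `D`. -/
noncomputable def expStructure (D : DefExt.{u, v, u', v', w} L L₂ T) (M : Type w)
    [Nonempty M] [L.Structure M] (hM : M ⊨ T) : (L.sum L₂).Structure M :=
  @Language.sumStructure L L₂ M _ (defL2Structure D M hM)

theorem expStructure_models (D : DefExt.{u, v, u', v', w} L L₂ T) (M : Type w)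
    [Nonempty M] [L.Structure M] (hM : M ⊨ T) :
    @Theory.Model (L.sum L₂) M (expStructure D M hM) D.theory := by
  letI S := expStructure D M hM
  refine (@models_defExt_iff L L₂ M _ S T D).mpr ⟨?_, ?_, ?_⟩
  · exact hM
  · intro n r xs
    exact Iff.rfl
  · intro n f xs y
    constructor
    · rintro rfl
      exact (D.admissible f M hM xs).choose_spec.1
    · intro hy
      exact ((D.admissible f M hM xs).choose_spec.2 y hy).symm

theorem defExt_structure_unique (D : DefExt.{u, v, u', v', w} L L₂ T) {M : Type w}
    [Nonempty M] (S S' : (L.sum L₂).Structure M)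
    (hS : @Theory.Model (L.sum L₂) M S D.theory)
    (hS' : @Theory.Model (L.sum L₂) M S' D.theory)
    (h : @LHom.reduct L (L.sum L₂) LHom.sumInl M S =
      @LHom.reduct L (L.sum L₂) LHom.sumInl M S') : S = S' := by
  have hfun := (@models_defExt_iff L L₂ M _ S T D).mp hS
  have hfun' := (@models_defExt_iff L L₂ M _ S' T D).mp hS'
  apply structure_ext
  · intro n f xs
    cases f with
    | inl f₀ =>
      exact congrFun (congrFun (congrFun (congrArg (@Structure.funMap L M) h) n) f₀) xs
    | inr f₂ =>
      refine (hfun.2.2 f₂ xs (@Structure.funMap (L.sum L₂) M S' n (Sum.inr f₂) xs)).mpr ?_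
      have := (hfun'.2.2 f₂ xs (@Structure.funMap (L.sum L₂) M S' n (Sum.inr f₂) xs)).mp rfl
      rw [h]
      exact this
  · intro n r xs
    cases r with
    | inl r₀ =>
      rw [show @Structure.RelMap (L.sum L₂) M S n (Sum.inl r₀) =
        @Structure.RelMap L M (@LHom.reduct L (L.sum L₂) LHom.sumInl M S) n r₀ from rfl, h]
      exact Iff.rfl
    | inr r₂ =>
      refine (hfun.2.1 r₂ xs).trans ?_
      rw [h]
      exact (hfun'.2.1 r₂ xs).symm

/-- Restriction of an elementary embedding along a language morphism. -/
def reductEmb {L' : FirstOrder.Language.{u₀, v₀}} {L'' : FirstOrder.Language.{u₁, v₁}}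
    (φ : L' →ᴸ L'') {M N : Type w} [L''.Structure M] [L''.Structure N]
    (h : M ↪ₑ[L''] N) :
    @FirstOrder.Language.ElementaryEmbedding L' M N (φ.reduct M) (φ.reduct N) :=
  letI := φ.reduct M
  letI := φ.reduct N
  { toFun := h
    map_formula' := fun {_} ψ x => by
      haveI := LHom.isExpansionOn_reduct φ M
      haveI := LHom.isExpansionOn_reduct φ N
      have h' := h.map_formula (φ.onFormula ψ) x
      rwa [LHom.realize_onFormula, LHom.realize_onFormula] at h' }

/-- An `L`-elementary map between models of a definitional extension is
`(L.sum L₂)`-elementary. -/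
def elementaryTransfer (D : DefExt.{u, v, u', v', w} L L₂ T) {M N : Type w}
    [Nonempty M] [Nonempty N] [(L.sum L₂).Structure M] [(L.sum L₂).Structure N]
    (hM : M ⊨ D.theory) (hN : N ⊨ D.theory)
    (g : @FirstOrder.Language.ElementaryEmbedding L M N
      ((LHom.sumInl : L →ᴸ L.sum L₂).reduct M) ((LHom.sumInl : L →ᴸ L.sum L₂).reduct N)) :
    M ↪ₑ[L.sum L₂] N where
  toFun := g
  map_formula' := fun {n} φ x => by
    obtain ⟨ψ, hψ⟩ := exists_translation D (φ : (L.sum L₂).BoundedFormula (Fin n) 0)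
    have hN' := hψ N hN (g ∘ x) default
    have hM' := hψ M hM x default
    letI := (LHom.sumInl : L →ᴸ L.sum L₂).reduct M
    letI := (LHom.sumInl : L →ᴸ L.sum L₂).reduct N
    have hg := g.map_formula (ψ : L.Formula (Fin n)) x
    exact hN'.trans (hg.trans hM'.symm)

end Expansion



section Build

variable {T₁ : L.Theory} {T₂ : L₂.Theory}

/-- The forward transfer condition of a definitional equivalence. -/
def Cond (D₁ : DefExt.{u, v, u', v', w} L L₂ T₁) (D₂ : DefExt.{u', v', u, v, w} L₂ L T₂) : Prop :=
  ∀ (M : Type w) [Nonempty M] [S : (L.sum L₂).Structure M],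
    @FirstOrder.Language.Theory.Model (L.sum L₂) M S D₁.theory →
    @FirstOrder.Language.Theory.Model (L₂.sum L) M
      (@LHom.reduct (L₂.sum L) (L.sum L₂) sumCommHom M S) D₂.theory

/-- Object part of the functor `Mod T₁ ⥤ Mod T₂`. -/
noncomputable def buildObj (D₁ : DefExt.{u, v, u', v', w} L L₂ T₁)
    (D₂ : DefExt.{u', v', u, v, w} L₂ L T₂) (cond : Cond D₁ D₂)
    (M : Theory.ModelType.{u, v, w} T₁) : Theory.ModelType.{u', v', w} T₂ :=
  letI SM : (L.sum L₂).Structure M := expStructure D₁ M M.is_model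
  letI S2 : (L₂.sum L).Structure M := @LHom.reduct (L₂.sum L) (L.sum L₂) sumCommHom M SM
  { Carrier := M
    struc := @LHom.reduct L₂ (L₂.sum L) LHom.sumInl M S2
    is_model := ((@models_defExt_iff L₂ L M _ S2 T₂ D₂).mp
      (cond M (expStructure_models D₁ M M.is_model))).1
    nonempty' := M.nonempty' }

/-- Morphism part of the functor `Mod T₁ ⥤ Mod T₂`. -/
noncomputable def buildMap (D₁ : DefExt.{u, v, u', v', w} L L₂ T₁)
    (D₂ : DefExt.{u', v', u, v, w} L₂ L T₂) (cond : Cond D₁ D₂)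
    {M N : Theory.ModelType.{u, v, w} T₁} (h : M ⟶ N) :
    buildObj D₁ D₂ cond M ⟶ buildObj D₁ D₂ cond N :=
  letI SM : (L.sum L₂).Structure M := expStructure D₁ M M.is_model
  letI SN : (L.sum L₂).Structure N := expStructure D₁ N N.is_model
  @reductEmb L₂ (L₂.sum L) LHom.sumInl M N
    (@LHom.reduct (L₂.sum L) (L.sum L₂) sumCommHom M SM)
    (@LHom.reduct (L₂.sum L) (L.sum L₂) sumCommHom N SN)
    (@reductEmb (L₂.sum L) (L.sum L₂) sumCommHom M N SM SN
      (@elementaryTransfer L L₂ T₁ D₁ M N _ _ SM SN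
        (expStructure_models D₁ M M.is_model) (expStructure_models D₁ N N.is_model) h))

/-- The functor `Mod T₁ ⥤ Mod T₂` induced by a definitional equivalence. -/
noncomputable def buildFunctor (D₁ : DefExt.{u, v, u', v', w} L L₂ T₁)
    (D₂ : DefExt.{u', v', u, v, w} L₂ L T₂) (cond : Cond D₁ D₂) :
    Theory.ModelType.{u, v, w} T₁ ⥤ Theory.ModelType.{u', v', w} T₂ where
  obj := buildObj D₁ D₂ cond
  map := buildMap D₁ D₂ cond
  map_id _ := ElementaryEmbedding.ext fun _ => rfl
  map_comp _ _ := ElementaryEmbedding.ext fun _ => rfl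

theorem modelType_eq {L' : FirstOrder.Language.{u₀, v₀}} {T : L'.Theory}
    {M N : Theory.ModelType.{u₀, v₀, w₀} T} (h1 : M.Carrier = N.Carrier)
    (h2 : HEq M.struc N.struc) : M = N := by
  rcases M with ⟨MC, MS, MM, MN⟩
  rcases N with ⟨NC, NS, NM, NN⟩
  cases h1
  cases h2
  rfl

theorem build_build_obj (D₁ : DefExt.{u, v, u', v', w} L L₂ T₁)
    (D₂ : DefExt.{u', v', u, v, w} L₂ L T₂) (cond : Cond D₁ D₂) (cond' : Cond D₂ D₁)
    (M : Theory.ModelType.{u, v, w} T₁) :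
    buildObj D₂ D₁ cond' (buildObj D₁ D₂ cond M) = M := by
  letI SM : (L.sum L₂).Structure M := expStructure D₁ M M.is_model
  refine modelType_eq rfl (heq_of_eq ?_)
  show @LHom.reduct L (L.sum L₂) LHom.sumInl M
      (@LHom.reduct (L.sum L₂) (L₂.sum L) (@sumCommHom L₂ L) M
        (expStructure D₂ (buildObj D₁ D₂ cond M) (buildObj D₁ D₂ cond M).is_model)) = M.struc
  have key : expStructure D₂ (buildObj D₁ D₂ cond M) (buildObj D₁ D₂ cond M).is_model =
      @LHom.reduct (L₂.sum L) (L.sum L₂) sumCommHom M (expStructure D₁ M M.is_model) := by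
    refine defExt_structure_unique D₂ _ _ (expStructure_models D₂ _ _)
      (cond M (expStructure_models D₁ M M.is_model)) ?_
    rfl
  rw [key, reduct_comm_comm]
  rfl

theorem emb_heq {L' : FirstOrder.Language.{u₀, v₀}} {T : L'.Theory}
    {A B A' B' : Theory.ModelType.{u₀, v₀, w₀} T} (eA : A = A') (eB : B = B')
    (f : A ⟶ B) (g : A' ⟶ B')
    (h : HEq
      (@DFunLike.coe (@FirstOrder.Language.ElementaryEmbedding L' A.Carrier B.Carrier
        A.struc B.struc) A.Carrier (fun _ => B.Carrier) _ f)
      (@DFunLike.coe (@FirstOrder.Language.ElementaryEmbedding L' A'.Carrier B'.Carrier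
        A'.struc B'.struc) A'.Carrier (fun _ => B'.Carrier) _ g)) : HEq f g := by
  subst eA
  subst eB
  exact heq_of_eq (ElementaryEmbedding.ext fun x => congrFun (eq_of_heq h) x)

theorem build_build_eq (D₁ : DefExt.{u, v, u', v', w} L L₂ T₁)
    (D₂ : DefExt.{u', v', u, v, w} L₂ L T₂) (cond : Cond D₁ D₂) (cond' : Cond D₂ D₁) :
    buildFunctor D₁ D₂ cond ⋙ buildFunctor D₂ D₁ cond' = 𝟭 _ := by
  refine CategoryTheory.Functor.hext (build_build_obj D₁ D₂ cond cond') ?_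
  intro X Y f
  exact emb_heq (build_build_obj D₁ D₂ cond cond' X) (build_build_obj D₁ D₂ cond cond' Y)
    ((buildFunctor D₁ D₂ cond ⋙ buildFunctor D₂ D₁ cond').map f) f HEq.rfl

end Build


/-- If two first-order theories `T₁` and `T₂` are definitionally
equivalent, then their categories of models `Mod(T₁)` and `Mod(T₂)` (with elementary
embeddings as morphisms) are equivalent categories. -/
theorem defEquiv_categoricallyEquivalent {T₁ : L.Theory} {T₂ : L₂.Theory}
    (h : DefEquiv.{u, v, u', v', w} T₁ T₂) :
    Nonempty (Theory.ModelType.{u, v, w} T₁ ≌ Theory.ModelType.{u', v', w} T₂) := by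
  obtain ⟨D₁, D₂, heq⟩ := h
  have cond : Cond D₁ D₂ := by
    intro M iN iS hS
    exact (@heq M iN iS).mp hS
  have cond' : Cond D₂ D₁ := by
    intro M iN iS2 h2
    letI S' : (L.sum L₂).Structure M :=
      @LHom.reduct (L.sum L₂) (L₂.sum L) (@sumCommHom L₂ L) M iS2
    have e : @LHom.reduct (L₂.sum L) (L.sum L₂) (@sumCommHom L L₂) M S' = iS2 :=
      @reduct_comm_comm L₂ L M iS2
    exact (@heq M iN S').mpr (model_congr e.symm h2)
  exact ⟨CategoryTheory.Equivalence.mk (buildFunctor D₁ D₂ cond) (buildFunctor D₂ D₁ cond')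
    (eqToIso (build_build_eq D₁ D₂ cond cond').symm)
    (eqToIso (build_build_eq D₂ D₁ cond' cond))⟩

end MoritaPaper
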